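/- Let 0 ≤ λ_i ≤ 1 with λ_1 + λ_2 < 1 and λ_2 + λ_3 < 1, and let the 3-queue path-graph system evolve under the non-MSM inner-queue policy π_IQ defined by: S(t) = (0,1,0) if Q_2(t) > 0, and S(t) = (1,0,1) otherwise. Then limsup_{T→∞} (1/T) ∑_{t=0}^{T−1} ∑_{i=1}^{3} E[Q_i(t)] < ∞; that is, π_IQ is throughput-optimal even though it does not always schedule the maximum possible number of nonempty non-interfering queues. -/

import Mathlib

open MeasureTheory ProbabilityTheory Filter
open scoped ENNReal


lemma nat_drift (x s a : ℕ) (hs : s ≤ 1) (ha : a ≤ 1) :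
    (x - s + a)^2 + 2 * x * s ≤ x^2 + 2 * x * a + 2 := by
  interval_cases s <;> interval_cases a <;> rcases x with _ | x <;> simp <;> nlinarith

lemma queue_sum_bound {Ω : Type*} [MeasurableSpace Ω] (μ : Measure Ω) [IsProbabilityMeasure μ]
    (X Arr Srv : ℕ → Ω → ℕ)
    (hX0 : ∀ ω, X 0 ω = 0)
    (hevol : ∀ t ω, X (t+1) ω = X t ω - Srv t ω + Arr t ω)
    (hA1 : ∀ t ω, Arr t ω ≤ 1) (hS1 : ∀ t ω, Srv t ω ≤ 1)
    (hXm : ∀ t, Measurable (X t)) (hAm : ∀ t, Measurable (Arr t)) (hSm : ∀ t, Measurable (Srv t))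
    (a s ε : ℝ≥0∞) (haf : a ≠ ⊤) (hεf : ε ≠ ⊤) (hε : ε ≠ 0) (hgap : a + ε ≤ s)
    (hprodA : ∀ t, ∫⁻ ω, (X t ω : ℝ≥0∞) * (Arr t ω : ℝ≥0∞) ∂μ
        ≤ (∫⁻ ω, (X t ω : ℝ≥0∞) ∂μ) * a)
    (hprodS : ∀ t, (∫⁻ ω, (X t ω : ℝ≥0∞) ∂μ) * s
        ≤ ∫⁻ ω, (X t ω : ℝ≥0∞) * (Srv t ω : ℝ≥0∞) ∂μ) :
    ∀ T : ℕ, ∑ t ∈ Finset.range T, ∫⁻ ω, (X t ω : ℝ≥0∞) ∂μ ≤ (T : ℝ≥0∞) / ε := by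
  set E : ℕ → ℝ≥0∞ := fun t => ∫⁻ ω, (X t ω : ℝ≥0∞) ∂μ with hE
  set F : ℕ → ℝ≥0∞ := fun t => ∫⁻ ω, ((X t ω : ℝ≥0∞))^2 ∂μ with hF
  have mX : ∀ t, Measurable (fun ω => (X t ω : ℝ≥0∞)) :=
    fun t => (measurable_of_countable _).comp (hXm t)
  have mX2 : ∀ t, Measurable (fun ω => ((X t ω : ℝ≥0∞))^2) :=
    fun t => (measurable_of_countable (fun n : ℕ => ((n : ℝ≥0∞))^2)).comp (hXm t)
  have mA : ∀ t, Measurable (fun ω => (Arr t ω : ℝ≥0∞)) :=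
    fun t => (measurable_of_countable _).comp (hAm t)
  have mS : ∀ t, Measurable (fun ω => (Srv t ω : ℝ≥0∞)) :=
    fun t => (measurable_of_countable _).comp (hSm t)
  have hXle : ∀ t ω, X t ω ≤ t := by
    intro t
    induction t with
    | zero => intro ω; simp [hX0]
    | succ u ih => intro ω; rw [hevol]; have := ih ω; have := hA1 u ω; omega
  have hEfin : ∀ t, E t ≠ ⊤ := by
    intro t
    have : E t ≤ (t : ℝ≥0∞) := by
      calc E t ≤ ∫⁻ _, (t : ℝ≥0∞) ∂μ := lintegral_mono (fun ω => by
              exact (Nat.cast_le (α := ℝ≥0∞)).mpr (hXle t ω))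
        _ = t := by simp
    exact (lt_of_le_of_lt this (ENNReal.natCast_lt_top t)).ne
  -- one-step drift
  have key : ∀ t, F (t+1) + 2 * ε * E t ≤ F t + 2 := by
    intro t
    have ptw : ∀ ω, ((X (t+1) ω : ℝ≥0∞))^2 + 2 * ((X t ω : ℝ≥0∞) * (Srv t ω : ℝ≥0∞))
        ≤ ((X t ω : ℝ≥0∞))^2 + 2 * ((X t ω : ℝ≥0∞) * (Arr t ω : ℝ≥0∞)) + 2 := by
      intro ω
      have h := nat_drift (X t ω) (Srv t ω) (Arr t ω) (hS1 t ω) (hA1 t ω)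
      rw [← hevol t ω] at h
      have := (Nat.cast_le (α := ℝ≥0∞)).mpr h
      push_cast at this
      exact le_of_le_of_eq (le_of_eq_of_le (by ring) this) (by ring)
    have hint : F (t+1) + 2 * ∫⁻ ω, (X t ω : ℝ≥0∞) * (Srv t ω : ℝ≥0∞) ∂μ
        ≤ F t + 2 * (∫⁻ ω, (X t ω : ℝ≥0∞) * (Arr t ω : ℝ≥0∞) ∂μ) + 2 := by
      have lhs : F (t+1) + 2 * ∫⁻ ω, (X t ω : ℝ≥0∞) * (Srv t ω : ℝ≥0∞) ∂μ
          = ∫⁻ ω, (((X (t+1) ω : ℝ≥0∞))^2 + 2 * ((X t ω : ℝ≥0∞) * (Srv t ω : ℝ≥0∞))) ∂μ := by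
        rw [lintegral_add_left (mX2 (t+1)), lintegral_const_mul (f := fun ω => (X t ω : ℝ≥0∞) * (Srv t ω : ℝ≥0∞)) 2 ((mX t).mul (mS t))]
      have rhs : ∫⁻ ω, (((X t ω : ℝ≥0∞))^2 + 2 * ((X t ω : ℝ≥0∞) * (Arr t ω : ℝ≥0∞)) + 2) ∂μ
          = F t + 2 * (∫⁻ ω, (X t ω : ℝ≥0∞) * (Arr t ω : ℝ≥0∞) ∂μ) + 2 := by
        rw [lintegral_add_right _ measurable_const,
          lintegral_add_left (mX2 t) , lintegral_const_mul (f := fun ω => (X t ω : ℝ≥0∞) * (Arr t ω : ℝ≥0∞)) 2 ((mX t).mul (mA t))]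
        simp [hF]
      rw [lhs, ← rhs]
      exact lintegral_mono ptw
    have step1 : F (t+1) + 2 * (E t * s) ≤ F t + 2 * (E t * a) + 2 := by
      calc F (t+1) + 2 * (E t * s)
          ≤ F (t+1) + 2 * ∫⁻ ω, (X t ω : ℝ≥0∞) * (Srv t ω : ℝ≥0∞) ∂μ := by
            gcongr; exact hprodS t
        _ ≤ F t + 2 * (∫⁻ ω, (X t ω : ℝ≥0∞) * (Arr t ω : ℝ≥0∞) ∂μ) + 2 := hint
        _ ≤ F t + 2 * (E t * a) + 2 := by gcongr; exact hprodA t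
    have step2 : (F (t+1) + 2 * ε * E t) + 2 * (E t * a) ≤ (F t + 2) + 2 * (E t * a) := by
      calc (F (t+1) + 2 * ε * E t) + 2 * (E t * a)
          = F (t+1) + 2 * (E t * (a + ε)) := by ring
        _ ≤ F (t+1) + 2 * (E t * s) := by gcongr
        _ ≤ F t + 2 * (E t * a) + 2 := step1
        _ = (F t + 2) + 2 * (E t * a) := by ring
    have hfin : 2 * (E t * a) ≠ ⊤ := by
      exact ENNReal.mul_ne_top (by norm_num) (ENNReal.mul_ne_top (hEfin t) haf)
    exact (WithTop.add_le_add_iff_right hfin).mp step2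
  have tele : ∀ T : ℕ, F T + 2 * ε * ∑ t ∈ Finset.range T, E t ≤ 2 * T := by
    intro T
    induction T with
    | zero => simp [hF, hX0]
    | succ T ih =>
      rw [Finset.sum_range_succ]
      calc F (T+1) + 2 * ε * (∑ t ∈ Finset.range T, E t + E T)
          = (F (T+1) + 2 * ε * E T) + 2 * ε * ∑ t ∈ Finset.range T, E t := by ring
        _ ≤ (F T + 2) + 2 * ε * ∑ t ∈ Finset.range T, E t := add_le_add_left (key T) _
        _ = (F T + 2 * ε * ∑ t ∈ Finset.range T, E t) + 2 := by ring
        _ ≤ 2 * T + 2 := by gcongr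
        _ = 2 * ((T : ℝ≥0∞) + 1) := by ring
        _ = 2 * ((T + 1 : ℕ) : ℝ≥0∞) := by push_cast; ring
  intro T
  have h1 : 2 * ε * ∑ t ∈ Finset.range T, E t ≤ 2 * T :=
    le_trans (le_add_left le_rfl) (tele T)
  have h2 : ε * ∑ t ∈ Finset.range T, E t ≤ T := by
    have h3 : 2 * (ε * ∑ t ∈ Finset.range T, E t) ≤ 2 * (T : ℝ≥0∞) := by
      calc 2 * (ε * ∑ t ∈ Finset.range T, E t) = 2 * ε * ∑ t ∈ Finset.range T, E t := by ring
        _ ≤ 2 * T := h1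
    exact (ENNReal.mul_le_mul_iff_right (a := 2) (by norm_num) (by norm_num)).mp h3
  rw [ENNReal.le_div_iff_mul_le (Or.inl hε) (Or.inl hεf)]
  calc (∑ t ∈ Finset.range T, E t) * ε = ε * ∑ t ∈ Finset.range T, E t := by ring
    _ ≤ T := h2


lemma indep_of_determined {Ω : Type*} [MeasurableSpace Ω] {μ : Measure Ω}
    {ι : Type*} (f : ι → Ω → ℕ)
    (hindep : iIndepFun f μ) (hmeas : ∀ i, Measurable (f i))
    (X : Ω → ℕ) (S : Finset ι) (j : ι) (hj : j ∉ S)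
    (hdet : ∀ ω ω', (∀ i ∈ S, f i ω = f i ω') → X ω = X ω') :
    IndepFun X (f j) μ := by
  classical
  set r : Ω → (S → ℕ) := fun ω i => f i ω with hr
  have hrm : Measurable r := measurable_pi_lambda _ (fun i => hmeas i)
  set g : (S → ℕ) → ℕ := fun v => if h : ∃ ω, r ω = v then X h.choose else 0 with hgdef
  have hg : ∀ ω, g (r ω) = X ω := by
    intro ω
    have hex : ∃ ω', r ω' = r ω := ⟨ω, rfl⟩
    simp only [hgdef, dif_pos hex]
    exact hdet _ _ (fun i hi => congrFun hex.choose_spec ⟨i, hi⟩)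
  have hdisj : Disjoint S ({j} : Finset ι) := by
    simp [Finset.disjoint_singleton_right, hj]
  have base := hindep.indepFun_finset S {j} hdisj hmeas
  have hjm : j ∈ ({j} : Finset ι) := Finset.mem_singleton_self j
  have comp := base.comp (φ := g)
      (ψ := fun v : ({j} : Finset ι) → ℕ => v ⟨j, hjm⟩)
      (measurable_of_countable g) (measurable_pi_apply (⟨j, hjm⟩ : ({j} : Finset ι)) :
        Measurable fun v : ({j} : Finset ι) → ℕ => v ⟨j, hjm⟩)
  have e1 : (g ∘ fun a (i : S) => f i a) = X := funext fun ω => hg ω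
  have e2 : ((fun v : ({j} : Finset ι) → ℕ => v ⟨j, hjm⟩) ∘ fun a (i : ({j} : Finset ι)) => f i a)
      = f j := rfl
  rw [e1, e2] at comp
  exact comp

/-- The non-MSM inner-queue policy π_IQ for the 3-queue path graph:
serve queue 2 whenever it is nonempty, and serve queues 1 and 3 otherwise. -/
def piIQ (q : Fin 3 → ℕ) : Fin 3 → ℕ :=
  if 0 < q 1 then ![0, 1, 0] else ![1, 0, 1]

/-- Throughput optimality of the non-MSM policy π_IQ for the 3-queue path graph:
it is strongly stable for all rates with `λ_1+λ_2 < 1` and `λ_2+λ_3 < 1`, even though it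
does not always schedule the maximum possible number of nonempty non-interfering queues. -/
theorem piIQ_throughput_optimal
    {Ω : Type*} [MeasurableSpace Ω] (μ : Measure Ω) [IsProbabilityMeasure μ]
    (lam : Fin 3 → ℝ) (hlam : ∀ i, 0 ≤ lam i ∧ lam i ≤ 1)
    (hcap1 : lam 0 + lam 1 < 1) (hcap2 : lam 1 + lam 2 < 1)
    (A : Fin 3 → ℕ → Ω → ℕ)
    (hAmeas : ∀ i t, Measurable (A i t))
    (hA01 : ∀ i t ω, A i t ω ≤ 1)
    (hArate : ∀ i t, μ {ω | A i t ω = 1} = ENNReal.ofReal (lam i))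
    (hAindep : iIndepFun
      (fun p : Fin 3 × ℕ => fun ω => A p.1 p.2 ω) μ)
    (Q : ℕ → Fin 3 → Ω → ℕ)
    (hQ0 : ∀ i ω, Q 0 i ω = 0)
    (hQevol : ∀ t i ω,
      Q (t + 1) i ω = Q t i ω - piIQ (fun j => Q t j ω) i + A i t ω) :
    limsup (fun T : ℕ =>
        (∑ t ∈ Finset.range T, ∑ i, ∫⁻ ω, (Q t i ω : ℝ≥0∞) ∂μ) / (T : ℝ≥0∞))
      atTop < ⊤ := by
  classical
  have hpi1 : ∀ q : Fin 3 → ℕ, piIQ q 1 = if 0 < q 1 then 1 else 0 := by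
    intro q; unfold piIQ; split <;> simp
  -- queue 1 facts
  have hQ1le : ∀ t ω, Q t 1 ω ≤ 1 := by
    intro t
    induction t with
    | zero => intro ω; simp [hQ0]
    | succ u ih =>
      intro ω
      rw [hQevol u 1 ω, hpi1]
      have h1 := ih ω
      have h2 := hA01 1 u ω
      split <;> omega
  have hQ11 : ∀ t ω, Q (t + 1) 1 ω = A 1 t ω := by
    intro t ω
    rw [hQevol t 1 ω, hpi1]
    have h1 := hQ1le t ω
    split <;> omega
  have hQ1m : ∀ t, Measurable (fun ω => Q t 1 ω) := by
    intro t
    cases t with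
    | zero =>
      have : (fun ω => Q 0 1 ω) = fun _ => 0 := funext fun ω => hQ0 1 ω
      rw [this]; exact measurable_const
    | succ u =>
      have : (fun ω => Q (u + 1) 1 ω) = A 1 u := funext fun ω => hQ11 u ω
      rw [this]; exact hAmeas 1 u
  -- arrival integrals
  have hAset : ∀ (i : Fin 3) t, MeasurableSet {ω | A i t ω = 1} :=
    fun i t => hAmeas i t (measurableSet_singleton 1)
  have hAint : ∀ (i : Fin 3) t, ∫⁻ ω, (A i t ω : ℝ≥0∞) ∂μ = ENNReal.ofReal (lam i) := by
    intro i t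
    have heq : ∫⁻ ω, (A i t ω : ℝ≥0∞) ∂μ
        = ∫⁻ ω, Set.indicator {ω | A i t ω = 1} (fun _ => 1) ω ∂μ := by
      apply lintegral_congr
      intro ω
      by_cases h : A i t ω = 1
      · simp [Set.indicator_apply, Set.mem_setOf_eq, h]
      · have h0 : A i t ω = 0 := by have := hA01 i t ω; omega
        simp [Set.indicator_apply, Set.mem_setOf_eq, h, h0]
    rw [heq, lintegral_indicator (hAset i t) _, setLIntegral_one, hArate i t]
  -- the side-queue bound
  have side : ∀ k : Fin 3, k ≠ 1 →
      (∀ q : Fin 3 → ℕ, piIQ q k = if 0 < q 1 then 0 else 1) →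
      lam k + lam 1 < 1 →
      ∀ T : ℕ, ∑ t ∈ Finset.range T, ∫⁻ ω, (Q t k ω : ℝ≥0∞) ∂μ
        ≤ (T : ℝ≥0∞) / ENNReal.ofReal (1 - lam k - lam 1) := by
    intro k hk hpik hck
    set Srv : ℕ → Ω → ℕ := fun t ω => if 0 < Q t 1 ω then 0 else 1 with hSrv
    have hevolk : ∀ t ω, Q (t + 1) k ω = Q t k ω - Srv t ω + A k t ω := by
      intro t ω; rw [hQevol t k ω, hpik]
    have hS1 : ∀ t ω, Srv t ω ≤ 1 := by intro t ω; simp only [hSrv]; split <;> omega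
    have hSrvm : ∀ t, Measurable (Srv t) := by
      intro t
      have hset : MeasurableSet {ω | 0 < Q t 1 ω} := by
        have : {ω | 0 < Q t 1 ω} = (fun ω => Q t 1 ω) ⁻¹' ({0}ᶜ) := by
          ext ω; simp [Nat.pos_iff_ne_zero]
        rw [this]
        exact hQ1m t (measurableSet_singleton 0).compl
      exact Measurable.ite hset measurable_const measurable_const
    have hdetk : ∀ t ω ω', (∀ s < t, A k s ω = A k s ω') →
        (∀ s, s + 1 < t → A 1 s ω = A 1 s ω') → Q t k ω = Q t k ω' := by
      intro t
      induction t with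
      | zero => intro ω ω' _ _; rw [hQ0, hQ0]
      | succ u ih =>
        intro ω ω' h1 h2
        rw [hevolk u ω, hevolk u ω']
        have hq1 : Q u 1 ω = Q u 1 ω' := by
          cases u with
          | zero => rw [hQ0, hQ0]
          | succ v => rw [hQ11 v ω, hQ11 v ω']; exact h2 v (by omega)
        have hAk : A k u ω = A k u ω' := h1 u (by omega)
        have hQk : Q u k ω = Q u k ω' :=
          ih ω ω' (fun s hs => h1 s (by omega)) (fun s hs => h2 s (by omega))
        simp only [hSrv]
        rw [hq1, hAk, hQk]
    have hQmk : ∀ t, Measurable (fun ω => Q t k ω) := by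
      intro t
      induction t with
      | zero =>
        have : (fun ω => Q 0 k ω) = fun _ => 0 := funext fun ω => hQ0 k ω
        rw [this]; exact measurable_const
      | succ u ih =>
        have : (fun ω => Q (u + 1) k ω)
            = (fun p : ℕ × ℕ × ℕ => p.1 - p.2.1 + p.2.2)
              ∘ (fun ω => (Q u k ω, Srv u ω, A k u ω)) := funext fun ω => hevolk u ω
        rw [this]
        exact (measurable_of_countable _).comp (ih.prodMk ((hSrvm u).prodMk (hAmeas k u)))
    -- independence products
    have hprodA : ∀ t, ∫⁻ ω, (Q t k ω : ℝ≥0∞) * (A k t ω : ℝ≥0∞) ∂μ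
        ≤ (∫⁻ ω, (Q t k ω : ℝ≥0∞) ∂μ) * ENNReal.ofReal (lam k) := by
      intro t
      cases t with
      | zero => simp [hQ0]
      | succ u =>
        set S : Finset (Fin 3 × ℕ) := ({k} ×ˢ Finset.range (u + 1)) ∪ ({1} ×ˢ Finset.range u)
          with hS
        have hjS : ((k, u + 1) : Fin 3 × ℕ) ∉ S := by
          simp only [hS, Finset.mem_union, Finset.mem_product, Finset.mem_singleton,
            Finset.mem_range]
          push_neg
          constructor
          · intro _; omega
          · intro h; exact absurd h hk
        have hind : IndepFun (fun ω => Q (u + 1) k ω) (A k (u + 1)) μ := by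
          apply indep_of_determined (fun p : Fin 3 × ℕ => fun ω => A p.1 p.2 ω) hAindep
            (fun p => hAmeas p.1 p.2) _ S _ hjS
          intro ω ω' hagree
          apply hdetk
          · intro s hs
            exact hagree (k, s) (by
              simp only [hS, Finset.mem_union, Finset.mem_product, Finset.mem_singleton,
                Finset.mem_range]
              left; exact ⟨by trivial, hs⟩)
          · intro s hs
            exact hagree (1, s) (by
              simp only [hS, Finset.mem_union, Finset.mem_product, Finset.mem_singleton,
                Finset.mem_range]
              right; exact ⟨by trivial, by omega⟩)
        have hindc : IndepFun (fun ω => (Q (u + 1) k ω : ℝ≥0∞))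
            (fun ω => (A k (u + 1) ω : ℝ≥0∞)) μ :=
          hind.comp (measurable_of_countable _) (measurable_of_countable _)
        have heq := lintegral_mul_eq_lintegral_mul_lintegral_of_indepFun (μ := μ)
          ((measurable_of_countable _).comp (hQmk (u + 1)))
          ((measurable_of_countable _).comp (hAmeas k (u + 1))) hindc
        refine le_of_eq ?_
        calc ∫⁻ ω, (Q (u + 1) k ω : ℝ≥0∞) * (A k (u + 1) ω : ℝ≥0∞) ∂μ
            = (∫⁻ ω, (Q (u + 1) k ω : ℝ≥0∞) ∂μ) * ∫⁻ ω, (A k (u + 1) ω : ℝ≥0∞) ∂μ := heq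
          _ = (∫⁻ ω, (Q (u + 1) k ω : ℝ≥0∞) ∂μ) * ENNReal.ofReal (lam k) := by
              rw [hAint k (u + 1)]
    have hprodS : ∀ t, (∫⁻ ω, (Q t k ω : ℝ≥0∞) ∂μ) * ENNReal.ofReal (1 - lam 1)
        ≤ ∫⁻ ω, (Q t k ω : ℝ≥0∞) * (Srv t ω : ℝ≥0∞) ∂μ := by
      intro t
      cases t with
      | zero => simp [hQ0]
      | succ u =>
        set S : Finset (Fin 3 × ℕ) := ({k} ×ˢ Finset.range (u + 1)) ∪ ({1} ×ˢ Finset.range u)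
          with hS
        have hjS : ((1, u) : Fin 3 × ℕ) ∉ S := by
          simp only [hS, Finset.mem_union, Finset.mem_product, Finset.mem_singleton,
            Finset.mem_range]
          push_neg
          constructor
          · intro h; exact absurd h.symm hk
          · intro _; omega
        have hind : IndepFun (fun ω => Q (u + 1) k ω) (A 1 u) μ := by
          apply indep_of_determined (fun p : Fin 3 × ℕ => fun ω => A p.1 p.2 ω) hAindep
            (fun p => hAmeas p.1 p.2) _ S _ hjS
          intro ω ω' hagree
          apply hdetk
          · intro s hs
            exact hagree (k, s) (by
              simp only [hS, Finset.mem_union, Finset.mem_product, Finset.mem_singleton,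
                Finset.mem_range]
              left; exact ⟨by trivial, hs⟩)
          · intro s hs
            exact hagree (1, s) (by
              simp only [hS, Finset.mem_union, Finset.mem_product, Finset.mem_singleton,
                Finset.mem_range]
              right; exact ⟨by trivial, by omega⟩)
        have hSrveq : (fun ω => (Srv (u + 1) ω : ℝ≥0∞))
            = (fun n : ℕ => ((if 0 < n then (0 : ℕ) else 1) : ℝ≥0∞)) ∘ (A 1 u) := by
          funext ω
          simp only [hSrv, Function.comp_apply, hQ11 u ω]
          split <;> simp
        have hindc : IndepFun (fun ω => (Q (u + 1) k ω : ℝ≥0∞))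
            (fun ω => (Srv (u + 1) ω : ℝ≥0∞)) μ := by
          rw [hSrveq]
          exact hind.comp (measurable_of_countable _) (measurable_of_countable _)
        have heq := lintegral_mul_eq_lintegral_mul_lintegral_of_indepFun (μ := μ)
          ((measurable_of_countable _).comp (hQmk (u + 1)))
          ((measurable_of_countable _).comp (hSrvm (u + 1))) hindc
        have hSint : ∫⁻ ω, (Srv (u + 1) ω : ℝ≥0∞) ∂μ = ENNReal.ofReal (1 - lam 1) := by
          have hieq : ∫⁻ ω, (Srv (u + 1) ω : ℝ≥0∞) ∂μ
              = ∫⁻ ω, Set.indicator ({ω | A 1 u ω = 1}ᶜ) (fun _ => 1) ω ∂μ := by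
            apply lintegral_congr
            intro ω
            by_cases h : A 1 u ω = 1
            · simp [hSrv, hQ11 u ω, Set.indicator_apply, Set.mem_compl_iff,
                Set.mem_setOf_eq, h]
            · have h0 : A 1 u ω = 0 := by have := hA01 1 u ω; omega
              simp [hSrv, hQ11 u ω, Set.indicator_apply, Set.mem_compl_iff,
                Set.mem_setOf_eq, h, h0]
          rw [hieq, lintegral_indicator (hAset 1 u).compl _, setLIntegral_one,
            prob_compl_eq_one_sub (hAset 1 u), hArate 1 u,
            ← ENNReal.ofReal_one, ← ENNReal.ofReal_sub _ (hlam 1).1]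
        refine le_of_eq ?_
        calc (∫⁻ ω, (Q (u + 1) k ω : ℝ≥0∞) ∂μ) * ENNReal.ofReal (1 - lam 1)
            = (∫⁻ ω, (Q (u + 1) k ω : ℝ≥0∞) ∂μ) * ∫⁻ ω, (Srv (u + 1) ω : ℝ≥0∞) ∂μ := by
              rw [hSint]
          _ = ∫⁻ ω, (Q (u + 1) k ω : ℝ≥0∞) * (Srv (u + 1) ω : ℝ≥0∞) ∂μ := heq.symm
    have hgap : ENNReal.ofReal (lam k) + ENNReal.ofReal (1 - lam k - lam 1)
        ≤ ENNReal.ofReal (1 - lam 1) := by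
      rw [← ENNReal.ofReal_add (hlam k).1 (by linarith)]
      apply le_of_eq
      congr 1
      ring
    exact queue_sum_bound μ (fun t ω => Q t k ω) (fun t => A k t) Srv
      (hQ0 k) hevolk (fun t ω => hA01 k t ω) hS1 hQmk (fun t => hAmeas k t) hSrvm
      (ENNReal.ofReal (lam k)) (ENNReal.ofReal (1 - lam 1))
      (ENNReal.ofReal (1 - lam k - lam 1))
      ENNReal.ofReal_ne_top ENNReal.ofReal_ne_top
      (by
        have : (0 : ℝ) < 1 - lam k - lam 1 := by linarith
        exact (ENNReal.ofReal_pos.mpr this).ne')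
      hgap hprodA hprodS
  -- middle queue
  have hmid : ∀ T : ℕ, ∑ t ∈ Finset.range T, ∫⁻ ω, (Q t 1 ω : ℝ≥0∞) ∂μ ≤ (T : ℝ≥0∞) := by
    intro T
    calc ∑ t ∈ Finset.range T, ∫⁻ ω, (Q t 1 ω : ℝ≥0∞) ∂μ
        ≤ ∑ _t ∈ Finset.range T, (1 : ℝ≥0∞) := by
          apply Finset.sum_le_sum
          intro t _
          calc ∫⁻ ω, (Q t 1 ω : ℝ≥0∞) ∂μ ≤ ∫⁻ _, (1 : ℝ≥0∞) ∂μ := by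
                apply lintegral_mono
                intro ω
                exact_mod_cast Nat.cast_le.mpr (hQ1le t ω)
            _ = 1 := by simp
      _ = (T : ℝ≥0∞) := by simp
  set ε0 : ℝ≥0∞ := ENNReal.ofReal (1 - lam 0 - lam 1) with hε0
  set ε2 : ℝ≥0∞ := ENNReal.ofReal (1 - lam 2 - lam 1) with hε2
  set C : ℝ≥0∞ := ε0⁻¹ + 1 + ε2⁻¹ with hC
  have hside0 := side 0 (by decide) (by intro q; unfold piIQ; split <;> simp) hcap1
  have hside2 := side 2 (by decide) (by intro q; unfold piIQ; split <;> simp) (by linarith)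
  have hbound : ∀ T : ℕ,
      (∑ t ∈ Finset.range T, ∑ i, ∫⁻ ω, (Q t i ω : ℝ≥0∞) ∂μ) / (T : ℝ≥0∞) ≤ C := by
    intro T
    have htot : ∑ t ∈ Finset.range T, ∑ i, ∫⁻ ω, (Q t i ω : ℝ≥0∞) ∂μ ≤ C * T := by
      have hsplit : ∑ t ∈ Finset.range T, ∑ i, ∫⁻ ω, (Q t i ω : ℝ≥0∞) ∂μ
          = (∑ t ∈ Finset.range T, ∫⁻ ω, (Q t 0 ω : ℝ≥0∞) ∂μ)
            + (∑ t ∈ Finset.range T, ∫⁻ ω, (Q t 1 ω : ℝ≥0∞) ∂μ)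
            + (∑ t ∈ Finset.range T, ∫⁻ ω, (Q t 2 ω : ℝ≥0∞) ∂μ) := by
        rw [← Finset.sum_add_distrib, ← Finset.sum_add_distrib]
        apply Finset.sum_congr rfl
        intro t _
        rw [Fin.sum_univ_three]
      rw [hsplit]
      calc (∑ t ∈ Finset.range T, ∫⁻ ω, (Q t 0 ω : ℝ≥0∞) ∂μ)
            + (∑ t ∈ Finset.range T, ∫⁻ ω, (Q t 1 ω : ℝ≥0∞) ∂μ)
            + (∑ t ∈ Finset.range T, ∫⁻ ω, (Q t 2 ω : ℝ≥0∞) ∂μ)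
          ≤ (T : ℝ≥0∞) / ε0 + (T : ℝ≥0∞) + (T : ℝ≥0∞) / ε2 := by
            gcongr
            · exact hside0 T
            · exact hmid T
            · exact hside2 T
        _ = C * T := by
            rw [hC]
            rw [ENNReal.div_eq_inv_mul, ENNReal.div_eq_inv_mul]
            ring
    exact ENNReal.div_le_of_le_mul htot
  have hlim : limsup (fun T : ℕ =>
      (∑ t ∈ Finset.range T, ∑ i, ∫⁻ ω, (Q t i ω : ℝ≥0∞) ∂μ) / (T : ℝ≥0∞)) atTop ≤ C := by
    calc limsup (fun T : ℕ =>
          (∑ t ∈ Finset.range T, ∑ i, ∫⁻ ω, (Q t i ω : ℝ≥0∞) ∂μ) / (T : ℝ≥0∞)) atTop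
        ≤ limsup (fun _ : ℕ => C) atTop :=
          Filter.limsup_le_limsup (Filter.Eventually.of_forall hbound)
      _ = C := Filter.limsup_const C
  refine lt_of_le_of_lt hlim ?_
  have h0 : ε0⁻¹ < ⊤ := ENNReal.inv_lt_top.mpr (ENNReal.ofReal_pos.mpr (by linarith))
  have h2 : ε2⁻¹ < ⊤ := ENNReal.inv_lt_top.mpr (ENNReal.ofReal_pos.mpr (by linarith))
  rw [hC]
  exact ENNReal.add_lt_top.mpr ⟨ENNReal.add_lt_top.mpr ⟨h0, ENNReal.one_lt_top⟩, h2⟩
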